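/- If v₁ > 0, v₃ > 0 and v₂² < v₁ v₃, then det Σ > 0. -/

import Mathlib

open MeasureTheory Set Matrix

private lemma rpow_split (y q : ℝ) (hy : 0 < y) (i j : ℕ) :
    y ^ ((i:ℝ) - (j:ℝ)/q) = y ^ i * (y ^ (-(1/q) : ℝ)) ^ j := by
  rw [← Real.rpow_natCast y i, ← Real.rpow_natCast (y ^ (-(1/q):ℝ)) j,
    ← Real.rpow_mul hy.le, ← Real.rpow_add hy]
  ring_nf

/-- If `v₁ > 0`, `v₃ > 0` and `v₂² < v₁ v₃`, then `det S > 0`. -/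
theorem stmt_8 (q : ℝ) (hq : 0 < q)
    (f : ℝ → ℝ) (hf : ContinuousOn f (Set.Icc 0 1))
    (hfpos : ∀ t ∈ Set.Icc (0:ℝ) 1, 0 < f t)
    (hfnc : ∃ s ∈ Set.Icc (0:ℝ) 1, ∃ t ∈ Set.Icc (0:ℝ) 1, f s ≠ f t)
    (m : ℕ → ℕ → ℝ)
    (hm : ∀ i j : ℕ, m i j = ∫ t in (0:ℝ)..1, f t ^ ((i : ℝ) - (j : ℝ) / q))
    (v₁ v₂ v₃ : ℝ) (hv1 : 0 < v₁) (hv3 : 0 < v₃) (hv : v₂ ^ 2 < v₁ * v₃)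
    (S : Matrix (Fin 3) (Fin 3) ℝ)
    (hS : S = !![v₁ * m 0 2, -(v₁ * m 1 2), v₂ * m 0 1;
                 -(v₁ * m 1 2), v₁ * m 2 2, -(v₂ * m 1 1);
                 v₂ * m 0 1, -(v₂ * m 1 1), v₃]) :
    0 < S.det := by
  set g : ℝ → ℝ := fun t => f t ^ (-(1/q) : ℝ) with hgdef
  have hgc : ContinuousOn g (Set.Icc 0 1) :=
    hf.rpow_const (fun t ht => Or.inl (hfpos t ht).ne')
  have hgpos : ∀ t ∈ Set.Icc (0:ℝ) 1, 0 < g t :=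
    fun t ht => Real.rpow_pos_of_pos (hfpos t ht) _
  -- m as integrals of f^i g^j
  have hm' : ∀ i j : ℕ, m i j = ∫ t in (0:ℝ)..1, f t ^ i * g t ^ j := by
    intro i j
    rw [hm]
    refine intervalIntegral.integral_congr (fun t ht => ?_)
    rw [uIcc_of_le zero_le_one] at ht
    exact rpow_split (f t) q (hfpos t ht) i j
  have hcont : ∀ i j : ℕ, ContinuousOn (fun t => f t ^ i * g t ^ j) (Set.Icc 0 1) :=
    fun i j => (hf.pow i).mul (hgc.pow j)
  have hint : ∀ i j : ℕ, IntervalIntegrable (fun t => f t ^ i * g t ^ j) volume 0 1 :=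
    fun i j => (hcont i j).intervalIntegrable_of_Icc zero_le_one
  -- positive definiteness
  have hpd : S.PosDef := by
    rw [Matrix.posDef_iff_dotProduct_mulVec]
    constructor
    · rw [hS]
      ext i j
      fin_cases i <;> fin_cases j <;> simp [Matrix.conjTranspose_apply]
    · intro x hx
      set X := x 0 with hX
      set Y := x 1 with hY
      set Z := x 2 with hZ
      set u : ℝ → ℝ := fun t => g t * (X - Y * f t) with hudef
      have huc : ContinuousOn u (Set.Icc 0 1) :=
        hgc.mul (continuousOn_const.sub (continuousOn_const.mul hf))
      have huint : IntervalIntegrable u volume 0 1 :=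
        huc.intervalIntegrable_of_Icc zero_le_one
      have hu2c : ContinuousOn (fun t => (u t)^2) (Set.Icc 0 1) := huc.pow 2
      have hu2int : IntervalIntegrable (fun t => (u t)^2) volume 0 1 :=
        hu2c.intervalIntegrable_of_Icc zero_le_one
      set s : ℝ := ∫ t in (0:ℝ)..1, u t with hsdef
      set I : ℝ := ∫ t in (0:ℝ)..1, (u t)^2 with hIdef
      -- key identities
      have key1 : X^2 * m 0 2 - 2*X*Y * m 1 2 + Y^2 * m 2 2 = I := by
        rw [hm' 0 2, hm' 1 2, hm' 2 2, hIdef,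
          ← intervalIntegral.integral_const_mul, ← intervalIntegral.integral_const_mul,
          ← intervalIntegral.integral_const_mul,
          ← intervalIntegral.integral_sub ((hint 0 2).const_mul _) ((hint 1 2).const_mul _),
          ← intervalIntegral.integral_add
            (((hint 0 2).const_mul _).sub ((hint 1 2).const_mul _)) ((hint 2 2).const_mul _)]
        refine intervalIntegral.integral_congr (fun t ht => ?_)
        simp only [hudef]
        ring
      have key2 : X * m 0 1 - Y * m 1 1 = s := by
        rw [hm' 0 1, hm' 1 1, hsdef,
          ← intervalIntegral.integral_const_mul, ← intervalIntegral.integral_const_mul,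
          ← intervalIntegral.integral_sub ((hint 0 1).const_mul _) ((hint 1 1).const_mul _)]
        refine intervalIntegral.integral_congr (fun t ht => ?_)
        simp only [hudef]
        ring
      -- Cauchy-Schwarz with constant 1
      have hCS : s^2 ≤ I := by
        have h0 : (0:ℝ) ≤ ∫ t in (0:ℝ)..1, (u t - s)^2 :=
          intervalIntegral.integral_nonneg zero_le_one (fun t _ => sq_nonneg _)
        have hexp : (∫ t in (0:ℝ)..1, (u t - s)^2)
            = I - 2*s*s + s^2 := by
          have : ∀ t, (u t - s)^2 = (u t)^2 - (2*s) * u t + s^2 := fun t => by ring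
          rw [intervalIntegral.integral_congr (fun t _ => this t),
            intervalIntegral.integral_add (hu2int.sub (huint.const_mul _))
              intervalIntegrable_const,
            intervalIntegral.integral_sub hu2int (huint.const_mul _),
            intervalIntegral.integral_const_mul, intervalIntegral.integral_const]
          simp [hsdef, hIdef]
        nlinarith [h0, hexp]
      -- positivity of I when (X,Y) ≠ 0
      have hIpos : ¬(X = 0 ∧ Y = 0) → 0 < I := by
        intro hXY
        have : ∃ c ∈ Set.Icc (0:ℝ) 1, 0 < (u c)^2 := by
          obtain ⟨a, ha, b, hb, hab⟩ := hfnc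
          have : ∃ c ∈ Set.Icc (0:ℝ) 1, X - Y * f c ≠ 0 := by
            by_cases hY0 : Y = 0
            · have hX0 : X ≠ 0 := fun h => hXY ⟨h, hY0⟩
              exact ⟨0, Set.left_mem_Icc.2 zero_le_one, by simp [hY0, hX0]⟩
            · by_contra hcon
              push_neg at hcon
              have h1 := hcon a ha
              have h2 := hcon b hb
              apply hab
              have : Y * f a = Y * f b := by linarith [sub_eq_zero.1 h1, sub_eq_zero.1 h2]
              exact mul_left_cancel₀ hY0 this
          obtain ⟨c, hc, hcne⟩ := this
          refine ⟨c, hc, ?_⟩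
          have : u c ≠ 0 := mul_ne_zero (hgpos c hc).ne' hcne
          positivity
        exact intervalIntegral.integral_pos zero_lt_one hu2c
          (fun t _ => sq_nonneg _) this
      -- expand the quadratic form
      have hform : star x ⬝ᵥ S *ᵥ x
          = v₁ * (X^2 * m 0 2 - 2*X*Y * m 1 2 + Y^2 * m 2 2)
            + 2*v₂*Z*(X * m 0 1 - Y * m 1 1) + v₃ * Z^2 := by
        simp [hS, Matrix.mulVec, dotProduct, Fin.sum_univ_three, ← hX, ← hY, ← hZ]
        ring
      rw [hform, key1, key2]
      by_cases hZ0 : Z = 0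
      · have hXY : ¬(X = 0 ∧ Y = 0) := by
          rintro ⟨h1, h2⟩
          apply hx
          funext i
          fin_cases i
          · exact h1
          · exact h2
          · exact hZ0
        have := hIpos hXY
        rw [hZ0]
        ring_nf
        nlinarith [mul_pos hv1 this]
      · have hZ2 : 0 < Z^2 := by positivity
        nlinarith [sq_nonneg (v₁*s + v₂*Z), mul_pos (sub_pos.2 hv) hZ2,
          mul_nonneg hv1.le (sub_nonneg.2 hCS), hv1]
  exact hpd.det_pos
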